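/- arXiv:1707.05641 — 4 statements merged into one kernel-verified Lean document; each statement's English description precedes it below -/
import Mathlib

section
/- Let ρ be a density matrix on ℂ^d and let P be a d×d complex matrix that is an orthogonal projection (P = P† = P²). Then the trace norm of (I − P)·ρ·P satisfies ‖(I − P) ρ P‖₁ ≤ √(Tr((I − P) ρ)). -/
open Matrix
open scoped ComplexOrder

/-- The trace norm `‖A‖₁ = Tr √(Aᴴ A)` of a complex matrix. -/
noncomputable def traceNorm {n : Type*} [Fintype n] [DecidableEq n]
    (A : Matrix n n ℂ) : ℝ :=
  ((Matrix.posSemidef_conjTranspose_mul_self A).1.eigenvectorUnitary.1 *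
    diagonal (((↑) : ℝ → ℂ) ∘ (√·) ∘ (Matrix.posSemidef_conjTranspose_mul_self A).1.eigenvalues) *
    (star (Matrix.posSemidef_conjTranspose_mul_self A).1.eigenvectorUnitary :
      Matrix n n ℂ)).trace.re

open scoped InnerProductSpace
lemma helper_entry {d : ℕ} (M : Matrix (Fin d) (Fin d) ℂ) (x : EuclideanSpace ℂ (Fin d)) (k : Fin d) :
    (M *ᵥ (x : Fin d → ℂ)) k
      = ⟪(WithLp.equiv 2 (Fin d → ℂ)).symm (fun j => (starRingEnd ℂ) (M k j)), x⟫_ℂ := by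
  simp [Matrix.mulVec, dotProduct, PiLp.inner_apply, RCLike.inner_apply, mul_comm]

lemma helper_frob {d : ℕ} (M : Matrix (Fin d) (Fin d) ℂ) :
    ∑ k, ‖(WithLp.equiv 2 (Fin d → ℂ)).symm (fun j => (starRingEnd ℂ) (M k j))‖ ^ 2
      = (Mᴴ * M).trace.re := by
  have h1 : ∀ k, ‖(WithLp.equiv 2 (Fin d → ℂ)).symm (fun j => (starRingEnd ℂ) (M k j))‖ ^ 2
      = ∑ j, ‖M k j‖ ^ 2 := by
    intro k
    rw [EuclideanSpace.norm_eq, Real.sq_sqrt (by positivity)]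
    simp
  simp_rw [h1]
  rw [Matrix.trace, Complex.re_sum, Finset.sum_comm]
  refine Finset.sum_congr rfl fun k _ => ?_
  rw [Matrix.diag_apply, Matrix.mul_apply, Complex.re_sum]
  refine Finset.sum_congr rfl fun j _ => ?_
  rw [Matrix.conjTranspose_apply]
  rw [show (star (M j k) * M j k) = (Complex.normSq (M j k) : ℂ) by
    rw [mul_comm]; exact Complex.mul_conj _]
  rw [Complex.ofReal_re, Complex.normSq_eq_norm_sq]

lemma helper_bessel {d : ℕ} {ι : Type*} [Fintype ι] (M : Matrix (Fin d) (Fin d) ℂ)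
    (w : ι → EuclideanSpace ℂ (Fin d)) (hw : Orthonormal ℂ w) :
    ∑ i, ∑ k, ‖(M *ᵥ (w i : Fin d → ℂ)) k‖ ^ 2 ≤ (Mᴴ * M).trace.re := by
  rw [Finset.sum_comm, ← helper_frob M]
  refine Finset.sum_le_sum fun k _ => ?_
  calc ∑ i, ‖(M *ᵥ (w i : Fin d → ℂ)) k‖ ^ 2
      = ∑ i, ‖⟪w i, (WithLp.equiv 2 (Fin d → ℂ)).symm (fun j => (starRingEnd ℂ) (M k j))⟫_ℂ‖ ^ 2 := by
        simp_rw [helper_entry, norm_inner_symm]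
    _ ≤ _ := hw.sum_inner_products_le _

lemma helper_adj {d : ℕ} (M : Matrix (Fin d) (Fin d) ℂ) (x y : Fin d → ℂ) :
    star x ⬝ᵥ (M *ᵥ y) = star (Mᴴ *ᵥ x) ⬝ᵥ y := by
  rw [star_mulVec, conjTranspose_conjTranspose, Matrix.dotProduct_mulVec]

lemma helper_cs {d : ℕ} (x y : Fin d → ℂ) :
    (star x ⬝ᵥ y).re ≤
      Real.sqrt (∑ k, ‖x k‖ ^ 2) * Real.sqrt (∑ k, ‖y k‖ ^ 2) := by
  have h : star x ⬝ᵥ y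
      = ⟪(WithLp.equiv 2 (Fin d → ℂ)).symm x, (WithLp.equiv 2 (Fin d → ℂ)).symm y⟫_ℂ := by
    simp [PiLp.inner_apply, RCLike.inner_apply, dotProduct, mul_comm]
  rw [h]
  calc (⟪(WithLp.equiv 2 (Fin d → ℂ)).symm x, (WithLp.equiv 2 (Fin d → ℂ)).symm y⟫_ℂ).re
      ≤ ‖⟪(WithLp.equiv 2 (Fin d → ℂ)).symm x, (WithLp.equiv 2 (Fin d → ℂ)).symm y⟫_ℂ‖ :=
        Complex.re_le_norm _
    _ ≤ ‖(WithLp.equiv 2 (Fin d → ℂ)).symm x‖ * ‖(WithLp.equiv 2 (Fin d → ℂ)).symm y‖ :=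
        norm_inner_le_norm _ _
    _ = _ := by
        rw [EuclideanSpace.norm_eq, EuclideanSpace.norm_eq]
        simp

lemma helper_trace_re_nonneg {d : ℕ} {M : Matrix (Fin d) (Fin d) ℂ} (hM : M.PosSemidef) :
    0 ≤ M.trace.re := by
  rw [Matrix.trace, Complex.re_sum]
  refine Finset.sum_nonneg fun i _ => ?_
  have h := hM.re_dotProduct_nonneg (Pi.single i 1)
  simpa [dotProduct, Matrix.mulVec_single, Pi.single_apply] using h


/-- For a density matrix `ρ` and an orthogonal projection `P` on `ℂ^d`,
`‖(I − P) ρ P‖₁ ≤ √(Tr((I − P) ρ))`. -/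
theorem traceNorm_compl_proj_mul_density_mul_proj_le {d : ℕ}
    (ρ P : Matrix (Fin d) (Fin d) ℂ)
    (hρ : ρ.PosSemidef) (hρ_tr : ρ.trace = 1)
    (hP_herm : Pᴴ = P) (hP_idem : P * P = P) :
    traceNorm ((1 - P) * ρ * P) ≤ Real.sqrt (((1 - P) * ρ).trace.re) := by
  classical
  set Q : Matrix (Fin d) (Fin d) ℂ := 1 - P with hQdef
  have hQ_herm : Qᴴ = Q := by
    rw [hQdef, conjTranspose_sub, conjTranspose_one, hP_herm]
  have hQ_idem : Q * Q = Q := by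
    rw [hQdef]
    simp [sub_mul, mul_sub, hP_idem]
  set R := (open scoped MatrixOrder in CFC.sqrt ρ) with hRdef
  have hR_herm : Rᴴ = R := by open scoped MatrixOrder in exact (CFC.sqrt_nonneg ρ).posSemidef.1
  have hRR : R * R = ρ := by open scoped MatrixOrder in exact CFC.sqrt_mul_sqrt_self ρ hρ.nonneg
  set A : Matrix (Fin d) (Fin d) ℂ := Q * ρ * P with hAdef
  set B : Matrix (Fin d) (Fin d) ℂ := Q * R with hBdef
  set C : Matrix (Fin d) (Fin d) ℂ := R * P with hCdef
  have hBC : A = B * C := by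
    rw [hAdef, hBdef, hCdef, ← hRR]
    rw [Matrix.mul_assoc, Matrix.mul_assoc, Matrix.mul_assoc]
  -- traces
  have htrB : (B * Bᴴ).trace = (Q * ρ).trace := by
    have e : B * Bᴴ = Q * ρ * Q := by
      rw [hBdef, conjTranspose_mul, hR_herm, hQ_herm, ← hRR]; noncomm_ring
    rw [e, Matrix.trace_mul_cycle, hQ_idem]
  have htrC : (Cᴴ * C).trace = (P * ρ).trace := by
    have e : Cᴴ * C = P * ρ * P := by
      rw [hCdef, conjTranspose_mul, hR_herm, hP_herm, ← hRR]; noncomm_ring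
    rw [e, Matrix.trace_mul_cycle, hP_idem]
  have hQρ_psd : (Q * ρ * Qᴴ).PosSemidef := hρ.mul_mul_conjTranspose_same Q
  have hPρ_psd : (P * ρ * Pᴴ).PosSemidef := hρ.mul_mul_conjTranspose_same P
  have htrQ_eq : (Q * ρ).trace = (Q * ρ * Qᴴ).trace := by
    rw [hQ_herm, Matrix.trace_mul_cycle Q ρ Q, hQ_idem]
  have htrP_eq : (P * ρ).trace = (P * ρ * Pᴴ).trace := by
    rw [hP_herm, Matrix.trace_mul_cycle P ρ P, hP_idem]
  have htrQ_nonneg : 0 ≤ (Q * ρ).trace.re := by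
    rw [htrQ_eq]; exact helper_trace_re_nonneg hQρ_psd
  have htrP_nonneg : 0 ≤ (P * ρ).trace.re := by
    rw [htrP_eq]; exact helper_trace_re_nonneg hPρ_psd
  have htr_split : (Q * ρ).trace.re + (P * ρ).trace.re = 1 := by
    have h1 : Q * ρ + P * ρ = ρ := by
      rw [hQdef, sub_mul, one_mul, sub_add_cancel]
    have h2 := congrArg Matrix.trace h1
    rw [Matrix.trace_add, hρ_tr] at h2
    have := congrArg Complex.re h2
    simpa using this
  have htrP_le_one : (P * ρ).trace.re ≤ 1 := by linarith
  -- spectral data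
  set H := Matrix.posSemidef_conjTranspose_mul_self A with hHdef
  set μ : Fin d → ℝ := H.1.eigenvalues with hμdef
  have hμ_nonneg : ∀ i, 0 ≤ μ i := H.eigenvalues_nonneg
  set v : Fin d → (Fin d → ℂ) := fun i => ⇑(H.1.eigenvectorBasis i) with hvdef
  set σ : Fin d → ℝ := fun i => Real.sqrt (μ i) with hσdef
  have hμσ : ∀ i, μ i = σ i * σ i := fun i =>
    (Real.mul_self_sqrt (hμ_nonneg i)).symm
  -- Step A : traceNorm = ∑ σ
  have hstepA : traceNorm A = ∑ i, σ i := by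
    show (H.1.eigenvectorUnitary.1 * diagonal (((↑) : ℝ → ℂ) ∘ (√·) ∘ H.1.eigenvalues) *
      (star H.1.eigenvectorUnitary : Matrix (Fin d) (Fin d) ℂ)).trace.re = _
    rw [Matrix.trace_mul_cycle,
      Unitary.coe_star_mul_self, one_mul, Matrix.trace_diagonal, Complex.re_sum]
    simp [hσdef, hμdef]
  -- Step B : dot products of images of eigenvectors
  have hdot : ∀ i j, star (A *ᵥ v i) ⬝ᵥ (A *ᵥ v j) = if i = j then (μ j : ℂ) else 0 := by
    intro i j
    rw [hvdef, star_mulVec, ← Matrix.dotProduct_mulVec, mulVec_mulVec,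
      H.1.mulVec_eigenvectorBasis j]
    have horth := H.1.eigenvectorBasis.orthonormal
    rw [orthonormal_iff_ite] at horth
    have h := horth i j
    rw [EuclideanSpace.inner_eq_star_dotProduct, dotProduct_comm] at h
    rw [dotProduct_smul]
    erw [h]
    split <;> simp [Complex.real_smul, hμdef]
  -- the u vectors
  set u : Fin d → (Fin d → ℂ) := fun i => ((σ i : ℂ))⁻¹ • (A *ᵥ v i) with hudef
  have hu_dot : ∀ i j, star (u i) ⬝ᵥ u j
      = ((σ i : ℂ))⁻¹ * ((σ j : ℂ))⁻¹ * (if i = j then (μ j : ℂ) else 0) := by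
    intro i j
    rw [hudef]
    simp only [star_smul, smul_dotProduct, dotProduct_smul, star_inv₀,
      Complex.star_def, Complex.conj_ofReal, hdot i j, smul_eq_mul]
    ring
  -- orthonormality of the u family
  have horthu : Orthonormal ℂ
      (fun i : {i : Fin d // σ i ≠ 0} => (WithLp.equiv 2 (Fin d → ℂ)).symm (u i.1)) := by
    rw [orthonormal_iff_ite]
    intro i j
    rw [EuclideanSpace.inner_eq_star_dotProduct, dotProduct_comm]
    have h := hu_dot i.1 j.1
    simp only [Equiv.apply_symm_apply, WithLp.equiv_symm_apply, WithLp.ofLp_toLp] at *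
    rw [h]
    by_cases hij : i = j
    · subst hij
      rw [if_pos rfl, if_pos rfl, hμσ i.1, Complex.ofReal_mul]
      have hσi : ((σ i.1 : ℂ)) ≠ 0 := by
        simpa using i.2
      field_simp
    · rw [if_neg (fun h' => hij (Subtype.ext h')), if_neg hij, mul_zero]
  -- σ as real part of a dot product
  have hσ_val : ∀ i, σ i ≠ 0 → (star (u i) ⬝ᵥ (A *ᵥ v i)).re = σ i := by
    intro i hi
    rw [hudef]
    simp only [star_smul, smul_dotProduct, star_inv₀, Complex.star_def,
      Complex.conj_ofReal, smul_eq_mul]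
    rw [hdot i i]
    simp only [eq_self_iff_true, if_true, ← Complex.ofReal_inv, ← Complex.ofReal_mul,
      Complex.ofReal_re]
    rw [hμσ i]
    field_simp
  -- pointwise Cauchy-Schwarz
  set b : Fin d → ℝ := fun i => ∑ k, ‖(Bᴴ *ᵥ u i) k‖ ^ 2 with hbdef
  set c : Fin d → ℝ := fun i => ∑ k, ‖(C *ᵥ v i) k‖ ^ 2 with hcdef
  have hstep : ∀ i, σ i ≠ 0 → σ i ≤ Real.sqrt (b i) * Real.sqrt (c i) := by
    intro i hi
    rw [← hσ_val i hi, hBC, ← mulVec_mulVec, helper_adj]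
    exact helper_cs _ _
  set t := Finset.univ.filter (fun i => σ i ≠ 0) with htdef
  have hmem : ∀ x : Fin d, x ∈ t ↔ σ x ≠ 0 := by
    intro x; simp [htdef]
  -- sum bounds via Bessel
  have hb_sum : ∑ i ∈ t, b i ≤ (Q * ρ).trace.re := by
    rw [Finset.sum_subtype t hmem b]
    calc ∑ i : {i : Fin d // σ i ≠ 0}, b i.1
        ≤ (Bᴴᴴ * Bᴴ).trace.re :=
          helper_bessel Bᴴ _ horthu
      _ = (Q * ρ).trace.re := by rw [conjTranspose_conjTranspose, htrB]
  have hc_sum : ∑ i ∈ t, c i ≤ (P * ρ).trace.re := by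
    calc ∑ i ∈ t, c i ≤ ∑ i, c i := by
          refine Finset.sum_le_sum_of_subset_of_nonneg (Finset.filter_subset _ _) ?_
          intro i _ _
          positivity
      _ ≤ (Cᴴ * C).trace.re := helper_bessel C _ (H.1.eigenvectorBasis.orthonormal)
      _ = (P * ρ).trace.re := by rw [htrC]
  -- assemble
  calc traceNorm A = ∑ i, σ i := hstepA
    _ = ∑ i ∈ t, σ i := (Finset.sum_filter_ne_zero _).symm
    _ ≤ ∑ i ∈ t, Real.sqrt (b i) * Real.sqrt (c i) :=
        Finset.sum_le_sum fun i hi => hstep i ((hmem i).1 hi)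
    _ ≤ Real.sqrt (∑ i ∈ t, b i) * Real.sqrt (∑ i ∈ t, c i) :=
        Real.sum_sqrt_mul_sqrt_le t (fun i => by positivity) (fun i => by positivity)
    _ ≤ Real.sqrt ((Q * ρ).trace.re) * Real.sqrt ((P * ρ).trace.re) := by
        gcongr
    _ ≤ Real.sqrt ((Q * ρ).trace.re) * 1 := by
        gcongr
        have := Real.sqrt_le_sqrt htrP_le_one
        simpa using this
    _ = Real.sqrt ((Q * ρ).trace.re) := mul_one _
end

section
/- Let H be a d×d Hermitian complex matrix with eigenvalues E₀ ≤ E₁ ≤ … ≤ E_{d−1} (listed with multiplicity) and corresponding orthonormal eigenbasis τ₀, …, τ_{d−1}, and for m < d let P_m = Σ_{k<m} τ_k τ_k† be the orthogonal projection onto the span of the first m eigenvectors. If ρ is a density matrix on ℂ^d with Tr(Hρ) ≤ E, and E₀ < E_m, then Tr((I − P_m)ρ) ≤ (E − E₀)/(E_m − E₀). -/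
open Matrix
open scoped ComplexOrder


private lemma trace_vecMulVec_mul' {d : ℕ} (v w : Fin d → ℂ) (ρ : Matrix (Fin d) (Fin d) ℂ) :
    (vecMulVec v w * ρ).trace = w ⬝ᵥ (ρ *ᵥ v) := by
  simp only [Matrix.trace, Matrix.diag, Matrix.mul_apply, vecMulVec_apply, dotProduct,
    mulVec, Finset.mul_sum]
  rw [Finset.sum_comm]
  refine Finset.sum_congr rfl fun j _ => Finset.sum_congr rfl fun i _ => by ring


private lemma sum_vecMulVec_eq_one {d : ℕ} (τ : Fin d → Fin d → ℂ)
    (hτ : ∀ i j, star (τ i) ⬝ᵥ τ j = if i = j then 1 else 0) :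
    ∑ k, vecMulVec (τ k) (star (τ k)) = (1 : Matrix (Fin d) (Fin d) ℂ) := by
  set U : Matrix (Fin d) (Fin d) ℂ := Matrix.of (fun k i => τ k i) with hU
  have h1 : U * Uᴴ = 1 := by
    ext i j
    have h := hτ j i
    simp only [dotProduct, Pi.star_apply] at h
    simp only [Matrix.mul_apply, Matrix.conjTranspose_apply, hU, Matrix.of_apply,
      Matrix.one_apply]
    calc ∑ x : Fin d, τ i x * star (τ j x) = ∑ x : Fin d, star (τ j x) * τ i x := by
          simp [mul_comm]
      _ = if j = i then 1 else 0 := h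
      _ = if i = j then 1 else 0 := by simp [eq_comm]
  have h2 : Uᴴ * U = 1 := mul_eq_one_comm.mp h1
  ext i j
  have h := congrArg (fun M => M j i) h2
  simp only [Matrix.mul_apply, Matrix.conjTranspose_apply, hU, Matrix.of_apply,
    Matrix.one_apply] at h
  simp only [Matrix.sum_apply, vecMulVec_apply, Pi.star_apply, Matrix.one_apply]
  calc ∑ x : Fin d, τ x i * star (τ x j) = ∑ x : Fin d, star (τ x j) * τ x i := by
        simp [mul_comm]
    _ = if j = i then 1 else 0 := h
    _ = if i = j then 1 else 0 := by simp [eq_comm]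


/-- Let `H = Σ_k E_k |τ_k⟩⟨τ_k|` be a Hermitian matrix with nondecreasing
eigenvalues `E` and orthonormal eigenbasis `τ`, and let `P_m` be the projection
onto the span of the first `m` eigenvectors.  If `ρ` is a density matrix with
`Tr(Hρ) ≤ E`, then `Tr((I − P_m)ρ) ≤ (E − E₀)/(E_m − E₀)`. -/
theorem trace_compl_spectral_proj_le {d : ℕ}
    (E : Fin d → ℝ) (hE_mono : Monotone E)
    (τ : Fin d → (Fin d → ℂ))
    (hτ_on : ∀ i j : Fin d, star (τ i) ⬝ᵥ τ j = if i = j then 1 else 0)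
    (H : Matrix (Fin d) (Fin d) ℂ)
    (hH : H = ∑ k : Fin d, (E k : ℂ) • vecMulVec (τ k) (star (τ k)))
    (m : Fin d)
    (Pm : Matrix (Fin d) (Fin d) ℂ)
    (hPm : Pm = ∑ k ∈ Finset.Iio m, vecMulVec (τ k) (star (τ k)))
    (ρ : Matrix (Fin d) (Fin d) ℂ)
    (hρ : ρ.PosSemidef) (hρ_tr : ρ.trace = 1)
    (Elevel : ℝ) (hEρ : (H * ρ).trace.re ≤ Elevel)
    (hgap : E ⟨0, m.pos⟩ < E m) :
    ((1 - Pm) * ρ).trace.re ≤ (Elevel - E ⟨0, m.pos⟩) / (E m - E ⟨0, m.pos⟩) := by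
  have hcompl : ∑ k, vecMulVec (τ k) (star (τ k)) = (1 : Matrix (Fin d) (Fin d) ℂ) :=
    sum_vecMulVec_eq_one τ hτ_on
  set E0 := E ⟨0, m.pos⟩ with hE0
  set q : Fin d → ℂ := fun k => star (τ k) ⬝ᵥ (ρ *ᵥ τ k) with hq
  set r : Fin d → ℝ := fun k => (q k).re with hrdef
  have hq0 : ∀ k, 0 ≤ q k := fun k => hρ.dotProduct_mulVec_nonneg (τ k)
  have hr0 : ∀ k, 0 ≤ r k := fun k => (Complex.le_def.mp (hq0 k)).1
  -- trace of each projector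
  have htr : ∀ k, (vecMulVec (τ k) (star (τ k)) * ρ).trace = q k := fun k =>
    trace_vecMulVec_mul' (τ k) (star (τ k)) ρ
  -- total probability one
  have hsum1 : ∑ k, r k = 1 := by
    have : ∑ k, q k = 1 := by
      rw [hq]
      calc ∑ k, star (τ k) ⬝ᵥ (ρ *ᵥ τ k)
          = ∑ k, (vecMulVec (τ k) (star (τ k)) * ρ).trace := by
            exact (Finset.sum_congr rfl fun k _ => (htr k).symm)
        _ = ((∑ k, vecMulVec (τ k) (star (τ k))) * ρ).trace := by
            rw [Finset.sum_mul, Matrix.trace_sum]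
        _ = 1 := by rw [hcompl, one_mul, hρ_tr]
    have := congrArg Complex.re this
    simpa [Complex.re_sum] using this
  -- energy expansion
  have hHtr : (H * ρ).trace.re = ∑ k, E k * r k := by
    have : (H * ρ).trace = ∑ k, (E k : ℂ) * q k := by
      rw [hH, Finset.sum_mul, Matrix.trace_sum]
      exact Finset.sum_congr rfl fun k _ => by
        rw [smul_mul_assoc, Matrix.trace_smul, htr k, smul_eq_mul]
    rw [this, Complex.re_sum]
    exact Finset.sum_congr rfl fun k _ => by simp [Complex.re_ofReal_mul, hrdef]
  -- LHS expansion
  have hLHS : ((1 - Pm) * ρ).trace.re = ∑ k ∈ (Finset.Iio m)ᶜ, r k := by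
    have h1 : ((1 - Pm) * ρ).trace = ρ.trace - (Pm * ρ).trace := by
      rw [Matrix.sub_mul, one_mul, Matrix.trace_sub]
    have h2 : (Pm * ρ).trace = ∑ k ∈ Finset.Iio m, q k := by
      rw [hPm, Finset.sum_mul, Matrix.trace_sum]
      exact Finset.sum_congr rfl fun k _ => htr k
    have h3 : ∑ k ∈ Finset.Iio m, r k + ∑ k ∈ (Finset.Iio m)ᶜ, r k = 1 := by
      rw [Finset.sum_add_sum_compl, hsum1]
    rw [h1, h2, Complex.sub_re, hρ_tr, Complex.re_sum]
    simp only [Complex.one_re]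
    linarith
  rw [hLHS, le_div_iff₀ (sub_pos.mpr hgap)]
  have key : ∑ k ∈ (Finset.Iio m)ᶜ, (E m - E0) * r k ≤ ∑ k, (E k - E0) * r k := by
    calc ∑ k ∈ (Finset.Iio m)ᶜ, (E m - E0) * r k
        ≤ ∑ k ∈ (Finset.Iio m)ᶜ, (E k - E0) * r k := by
          refine Finset.sum_le_sum fun k hk => ?_
          have hmk : m ≤ k := le_of_not_gt (by simpa [Finset.mem_compl, Finset.mem_Iio] using hk)
          exact mul_le_mul_of_nonneg_right (by linarith [hE_mono hmk]) (hr0 k)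
      _ ≤ ∑ k, (E k - E0) * r k := by
          refine Finset.sum_le_sum_of_subset_of_nonneg (Finset.subset_univ _) fun k _ _ => ?_
          have : E0 ≤ E k := hE_mono (by exact Fin.mk_le_of_le_val (Nat.zero_le _))
          exact mul_nonneg (by linarith) (hr0 k)
  have expand : ∑ k, (E k - E0) * r k = (∑ k, E k * r k) - E0 := by
    rw [Finset.sum_congr rfl (fun k _ => by ring : ∀ k ∈ Finset.univ, (E k - E0) * r k = E k * r k - E0 * r k),
      Finset.sum_sub_distrib, ← Finset.mul_sum, hsum1, mul_one]
  have key2 : (E m - E0) * ∑ k ∈ (Finset.Iio m)ᶜ, r k ≤ (∑ k, E k * r k) - E0 := by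
    rw [Finset.mul_sum, ← expand]; exact key
  calc (∑ k ∈ (Finset.Iio m)ᶜ, r k) * (E m - E0) = (E m - E0) * ∑ k ∈ (Finset.Iio m)ᶜ, r k :=
        mul_comm _ _
    _ ≤ (∑ k, E k * r k) - E0 := key2
    _ ≤ Elevel - E0 := by rw [← hHtr]; linarith
end

section
/- Let H be a d×d Hermitian complex matrix with eigenvalues E₀ ≤ E₁ ≤ … ≤ E_{d−1} (with multiplicity) and corresponding orthonormal eigenbasis τ₀, …, τ_{d−1}; for m < d let P_m be the orthogonal projection onto the span of τ₀, …, τ_{m−1}, and define Π_m(ρ) = P_m ρ P_m + Tr((I−P_m)ρ)·τ₀τ₀†. Then for every density matrix ρ on ℂ^d one has Tr(H·Π_m(ρ)) ≤ Tr(H·ρ). -/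
open Matrix
open scoped ComplexOrder

/-- For `H = Σ_k E_k |τ_k⟩⟨τ_k|` with nondecreasing eigenvalues `E` and
orthonormal eigenbasis `τ`, the channel
`Π_m(ρ) = P_m ρ P_m + Tr((I−P_m)ρ)·τ₀τ₀†` (with `P_m` the projection onto the
first `m` eigenvectors) does not increase the mean energy:
`Tr(H·Π_m(ρ)) ≤ Tr(H·ρ)` for every density matrix `ρ`. -/
theorem energy_nonincreasing_spectral_proj_channel {d : ℕ}
    (E : Fin d → ℝ) (hE_mono : Monotone E)
    (τ : Fin d → (Fin d → ℂ))
    (hτ_on : ∀ i j : Fin d, star (τ i) ⬝ᵥ τ j = if i = j then 1 else 0)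
    (H : Matrix (Fin d) (Fin d) ℂ)
    (hH : H = ∑ k : Fin d, (E k : ℂ) • vecMulVec (τ k) (star (τ k)))
    (m : Fin d)
    (Pm : Matrix (Fin d) (Fin d) ℂ)
    (hPm : Pm = ∑ k ∈ Finset.Iio m, vecMulVec (τ k) (star (τ k)))
    (ρ : Matrix (Fin d) (Fin d) ℂ)
    (hρ : ρ.PosSemidef) (hρ_tr : ρ.trace = 1) :
    (H * (Pm * ρ * Pm +
        ((1 - Pm) * ρ).trace •
          vecMulVec (τ ⟨0, m.pos⟩) (star (τ ⟨0, m.pos⟩)))).trace.re ≤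
      (H * ρ).trace.re := by
  set vv : Fin d → Matrix (Fin d) (Fin d) ℂ := fun k => vecMulVec (τ k) (star (τ k)) with hvv
  -- product rule for rank-one projectors
  have hmul : ∀ j k, vv j * vv k = if j = k then vv j else 0 := by
    intro j k
    have h1 : vv j * vv k = (star (τ j) ⬝ᵥ τ k) • vecMulVec (τ j) (star (τ k)) := by
      ext a b
      simp only [hvv, Matrix.mul_apply, vecMulVec_apply, Pi.star_apply, Matrix.smul_apply,
        smul_eq_mul, dotProduct, Finset.sum_mul, Finset.mul_sum]
      exact Finset.sum_congr rfl fun i _ => by ring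
    rw [h1, hτ_on]
    split_ifs with h
    · subst h; simp [hvv]
    · simp
  -- general product expansion
  have expand : ∀ (s t : Finset (Fin d)) (f g : Fin d → ℂ),
      (∑ j ∈ s, f j • vv j) * (∑ k ∈ t, g k • vv k) = ∑ j ∈ s ∩ t, (f j * g j) • vv j := by
    intro s t f g
    rw [Finset.sum_mul, ← Finset.sum_ite_mem]
    refine Finset.sum_congr rfl fun j _ => ?_
    rw [Finset.mul_sum]
    have : ∀ k ∈ t, (f j • vv j) * (g k • vv k) = if k = j then (f j * g j) • vv j else 0 := by
      intro k _
      rw [smul_mul_assoc, mul_smul_comm, hmul]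
      split_ifs with h h' h'
      · subst h; rw [smul_smul]
      · exact absurd h.symm h'
      · exact absurd h'.symm h
      · simp
    rw [Finset.sum_congr rfl this, Finset.sum_ite_eq']
  have hPm' : Pm = ∑ k ∈ Finset.Iio m, (1 : ℂ) • vv k := by simp [hPm, hvv]
  have hH' : H = ∑ k : Fin d, (E k : ℂ) • vv k := hH
  -- c k = ⟨τ k, ρ τ k⟩
  set c : Fin d → ℂ := fun k => (vv k * ρ).trace with hc
  have key : ∀ k, c k = star (τ k) ⬝ᵥ ρ *ᵥ τ k := by
    intro k
    simp only [hc, hvv, Matrix.trace, Matrix.diag, Matrix.mul_apply, vecMulVec_apply,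
      dotProduct, mulVec, Pi.star_apply, Finset.mul_sum]
    rw [Finset.sum_comm]
    exact Finset.sum_congr rfl fun j _ => Finset.sum_congr rfl fun i _ => by ring
  have hc_nonneg : ∀ k, 0 ≤ c k := fun k => (key k) ▸ hρ.dotProduct_mulVec_nonneg (τ k)
  have hc_re : ∀ k, 0 ≤ (c k).re := fun k => (Complex.le_def.mp (hc_nonneg k)).1
  have hc_im : ∀ k, (c k).im = 0 := fun k => ((Complex.le_def.mp (hc_nonneg k)).2).symm
  -- trace of vv k
  have htr_vv : ∀ k, (vv k).trace = 1 := by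
    intro k
    have h := hτ_on k k
    simp only [if_pos rfl, eq_self_iff_true, if_true] at h
    rw [← h]
    simp [hvv, Matrix.trace, Matrix.diag, vecMulVec_apply, dotProduct, mul_comm]
  -- sum of all vv is 1
  have hres : ∑ k : Fin d, vv k = 1 := by
    set U : Matrix (Fin d) (Fin d) ℂ := Matrix.of fun i k => τ k i with hU
    have h1 : Uᴴ * U = 1 := by
      ext j k
      simpa [Matrix.mul_apply, conjTranspose_apply, dotProduct, Matrix.one_apply, hU]
        using hτ_on j k
    have h2 : U * Uᴴ = 1 := mul_eq_one_comm.mp h1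
    rw [← h2]
    ext i j
    simp [hvv, Matrix.mul_apply, Matrix.sum_apply, vecMulVec_apply, conjTranspose_apply, hU,
      mul_comm]
  have hsum_c : ∑ k : Fin d, c k = 1 := by
    calc ∑ k : Fin d, c k = ((∑ k : Fin d, vv k) * ρ).trace := by
          rw [Finset.sum_mul, trace_sum]
      _ = 1 := by rw [hres, one_mul, hρ_tr]
  -- trace(H ρ)
  have hHρ : (H * ρ).trace = ∑ k : Fin d, (E k : ℂ) * c k := by
    rw [hH', Finset.sum_mul, trace_sum]
    exact Finset.sum_congr rfl fun k _ => by rw [smul_mul_assoc, trace_smul, smul_eq_mul]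
  -- trace(H Pm ρ Pm)
  have hA : Pm * (H * Pm) = ∑ k ∈ Finset.Iio m, (E k : ℂ) • vv k := by
    rw [hH', hPm', expand, expand]
    simp [Finset.inter_comm]
  have hHPρP : (H * (Pm * ρ * Pm)).trace = ∑ k ∈ Finset.Iio m, (E k : ℂ) * c k := by
    have : H * (Pm * ρ * Pm) = ((H * Pm) * ρ) * Pm := by
      rw [← Matrix.mul_assoc, ← Matrix.mul_assoc]
    rw [this, Matrix.trace_mul_comm, ← Matrix.mul_assoc, hA,
      Finset.sum_mul, trace_sum]
    exact Finset.sum_congr rfl fun k _ => by rw [smul_mul_assoc, trace_smul, smul_eq_mul]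
  -- trace(H vv0)
  set i0 : Fin d := ⟨0, m.pos⟩ with hi0
  have hHvv0 : (H * vv i0).trace = (E i0 : ℂ) := by
    have h0 : vv i0 = ∑ k ∈ {i0}, (1 : ℂ) • vv k := by simp
    rw [hH', h0, expand]
    simp [htr_vv]
  -- trace((1-Pm)ρ)
  have ht : ((1 - Pm) * ρ).trace = ∑ k ∈ (Finset.Iio m)ᶜ, c k := by
    have h1 : (1 - Pm) * ρ = ρ - Pm * ρ := by rw [sub_mul, one_mul]
    have h2 : (Pm * ρ).trace = ∑ k ∈ Finset.Iio m, c k := by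
      rw [hPm, Finset.sum_mul, trace_sum]
    rw [h1, trace_sub, hρ_tr, h2, ← hsum_c, ← Finset.sum_compl_add_sum (Finset.Iio m)]
    ring
  -- full LHS trace
  have hLHS : (H * (Pm * ρ * Pm + ((1 - Pm) * ρ).trace • vv i0)).trace
      = ∑ k ∈ Finset.Iio m, (E k : ℂ) * c k + (∑ k ∈ (Finset.Iio m)ᶜ, c k) * (E i0 : ℂ) := by
    rw [mul_add, trace_add, hHPρP, mul_smul_comm, trace_smul, hHvv0, ht, smul_eq_mul]
  rw [hLHS, hHρ]
  -- take real parts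
  have hre_sum : ∀ (s : Finset (Fin d)),
      (∑ k ∈ s, (E k : ℂ) * c k).re = ∑ k ∈ s, E k * (c k).re := by
    intro s
    rw [Complex.re_sum]
    exact Finset.sum_congr rfl fun k _ => by
      simp [Complex.mul_re]
  have hre_c : (∑ k ∈ (Finset.Iio m)ᶜ, c k).re = ∑ k ∈ (Finset.Iio m)ᶜ, (c k).re :=
    Complex.re_sum _ _
  rw [Complex.add_re, hre_sum, Complex.mul_re, hre_c, hre_sum]
  simp only [Complex.ofReal_re, Complex.ofReal_im, mul_zero, sub_zero]
  rw [← Finset.sum_compl_add_sum (Finset.Iio m) (fun k => E k * (c k).re),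
    add_comm (∑ k ∈ (Finset.Iio m)ᶜ, E k * (c k).re)]
  refine add_le_add_right ?_ _
  rw [Finset.sum_mul]
  refine Finset.sum_le_sum fun k _ => ?_
  rw [mul_comm]
  exact mul_le_mul_of_nonneg_right (hE_mono (by simp [hi0, Fin.le_def])) (hc_re k)
end

section
/- Let f : ℝ → ℝ be nonnegative and concave on [0, ∞). Then the function x ↦ x^{1/4}·f(√x) is concave on [0, ∞). -/
open Real

/-- A nonnegative concave function on `[0,∞)` is nondecreasing. -/
lemma aux_mono (f : ℝ → ℝ)
    (hf_nonneg : ∀ a : ℝ, 0 ≤ a → 0 ≤ f a)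
    (hf_concave : ∀ a b t : ℝ, 0 ≤ a → 0 ≤ b → 0 ≤ t → t ≤ 1 →
      t * f a + (1 - t) * f b ≤ f (t * a + (1 - t) * b)) :
    ∀ A B : ℝ, 0 ≤ A → A ≤ B → f A ≤ f B := by
  intro A B hA hAB
  rcases eq_or_lt_of_le hAB with rfl | hlt
  · exact le_rfl
  by_contra h
  push_neg at h
  set d := f A - f B with hd
  have hdpos : 0 < d := by simp [hd]; linarith
  have hfA : 0 ≤ f A := hf_nonneg A hA
  set Y := A + (B - A) * f A / d + 1 with hY
  have hYB : B < Y := by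
    have h1 : B - A ≤ (B - A) * f A / d := by
      rw [le_div_iff₀ hdpos]
      have : d ≤ f A := by
        have := hf_nonneg B (by linarith)
        simp [hd]; linarith
      nlinarith
    simp [hY]; linarith
  have hYA : 0 < Y - A := by linarith
  set μ := (Y - B) / (Y - A) with hμ
  have hμ0 : 0 ≤ μ := div_nonneg (by linarith) (by linarith)
  have hμ1 : μ ≤ 1 := by rw [hμ, div_le_one hYA]; linarith
  have key := hf_concave A Y μ hA (by linarith) hμ0 hμ1
  have hmix : μ * A + (1 - μ) * Y = B := by
    have hμ' : μ * (Y - A) = Y - B := by rw [hμ]; exact div_mul_cancel₀ _ hYA.ne'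
    linear_combination -hμ'
  rw [hmix] at key
  have hfY : 0 ≤ f Y := hf_nonneg Y (by linarith)
  -- f B ≥ μ f A, so d = f A - f B ≤ (1-μ) f A = (B-A)/(Y-A) * f A
  have h2 : f B ≥ μ * f A := by nlinarith
  have h3 : (1 - μ) = (B - A) / (Y - A) := by
    rw [hμ]; field_simp; ring
  have h4 : d ≤ (B - A) / (Y - A) * f A := by
    rw [← h3]; nlinarith
  -- but (B-A)*f A / (Y-A) < d since Y - A > (B-A)*f A / d
  have h5 : (B - A) * f A < d * (Y - A) := by
    have : (Y - A) = (B - A) * f A / d + 1 := by rw [hY]; ring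
    rw [this]
    field_simp
    nlinarith
  rw [div_mul_eq_mul_div, le_div_iff₀ hYA] at h4
  linarith

/-- If `f : ℝ → ℝ` is nonnegative and concave on `[0, ∞)`, then
`x ↦ x^{1/4} · f(√x)` is concave on `[0, ∞)`. -/
theorem concave_rpow_quarter_mul_comp_sqrt (f : ℝ → ℝ)
    (hf_nonneg : ∀ a : ℝ, 0 ≤ a → 0 ≤ f a)
    (hf_concave : ∀ a b t : ℝ, 0 ≤ a → 0 ≤ b → 0 ≤ t → t ≤ 1 →
      t * f a + (1 - t) * f b ≤ f (t * a + (1 - t) * b)) :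
    ∀ a b t : ℝ, 0 ≤ a → 0 ≤ b → 0 ≤ t → t ≤ 1 →
      t * (a ^ ((1 : ℝ) / 4) * f (Real.sqrt a)) +
          (1 - t) * (b ^ ((1 : ℝ) / 4) * f (Real.sqrt b)) ≤
        (t * a + (1 - t) * b) ^ ((1 : ℝ) / 4) *
          f (Real.sqrt (t * a + (1 - t) * b)) := by
  -- main inequality assuming a ≤ b
  have key : ∀ a b t : ℝ, 0 ≤ a → 0 ≤ b → 0 ≤ t → t ≤ 1 → a ≤ b →
      t * (a ^ ((1 : ℝ) / 4) * f (Real.sqrt a)) +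
          (1 - t) * (b ^ ((1 : ℝ) / 4) * f (Real.sqrt b)) ≤
        (t * a + (1 - t) * b) ^ ((1 : ℝ) / 4) *
          f (Real.sqrt (t * a + (1 - t) * b)) := by
    intro a b t ha hb ht ht1 hab
    rcases eq_or_lt_of_le hab with rfl | hlt
    · have hc : t * a + (1 - t) * a = a := by ring
      rw [hc]; nlinarith [hf_nonneg (Real.sqrt a) (Real.sqrt_nonneg a)]
    have hbpos : 0 < b := lt_of_le_of_lt ha hlt
    set c := t * a + (1 - t) * b with hc
    have hca : a ≤ c := by nlinarith
    have hcb : c ≤ b := by nlinarith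
    have hc0 : 0 ≤ c := le_trans ha hca
    set A := Real.sqrt a with hA
    set B := Real.sqrt b with hB
    set C := Real.sqrt c with hC
    have hA0 : 0 ≤ A := Real.sqrt_nonneg a
    have hB0 : 0 ≤ B := Real.sqrt_nonneg b
    have hC0 : 0 ≤ C := Real.sqrt_nonneg c
    have hAC : A ≤ C := Real.sqrt_le_sqrt hca
    have hCB : C ≤ B := Real.sqrt_le_sqrt hcb
    have hABlt : A < B := by
      rw [hA, hB]; exact Real.sqrt_lt_sqrt ha hlt
    have hBA : 0 < B - A := by linarith
    -- chord line through (A, f A) and (B, f B)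
    set m := (f B - f A) / (B - A) with hm
    set k := f A - m * A with hk
    have hfA : f A = m * A + k := by rw [hk]; ring
    have hfB : f B = m * B + k := by
      rw [hk, hm]; field_simp; ring
    -- m ≥ 0 from monotonicity
    have hm0 : 0 ≤ m :=
      div_nonneg (by linarith [aux_mono f hf_nonneg hf_concave A B hA0 hABlt.le]) hBA.le
    -- k ≥ 0 : f A ≥ (A/B) f B
    have hBpos : 0 < B := Real.sqrt_pos.2 hbpos
    have hk0 : 0 ≤ k := by
      have hAB1 : A / B ≤ 1 := by rw [div_le_one hBpos]; linarith
      have h0 := hf_concave B 0 (A / B) hB0 le_rfl (div_nonneg hA0 hBpos.le) hAB1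
      have hm1 : A / B * B + (1 - A / B) * 0 = A := by field_simp; ring
      rw [hm1] at h0
      have hf0 : 0 ≤ f 0 := hf_nonneg 0 le_rfl
      -- f A ≥ (A/B) f B
      have h1 : A / B * f B ≤ f A := by nlinarith
      have h2 : A * f B ≤ B * f A := by
        rw [div_mul_eq_mul_div, div_le_iff₀ hBpos] at h1; nlinarith
      rw [hk, hm]
      rw [sub_nonneg, div_mul_eq_mul_div, div_le_iff₀ hBA]
      nlinarith
    -- chord below f at C
    set lam := (B - C) / (B - A) with hlam
    have hlam0 : 0 ≤ lam := div_nonneg (by linarith) hBA.le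
    have hlam1 : lam ≤ 1 := by rw [hlam, div_le_one hBA]; linarith
    have hmixC : lam * A + (1 - lam) * B = C := by
      rw [hlam]; field_simp; ring
    have hchord : m * C + k ≤ f C := by
      have h0 := hf_concave A B lam hA0 hB0 hlam0 hlam1
      rw [hmixC] at h0
      calc m * C + k = lam * (m * A + k) + (1 - lam) * (m * B + k) := by
            rw [← hmixC]; ring
        _ = lam * f A + (1 - lam) * f B := by rw [hfA, hfB]
        _ ≤ f C := h0
    -- power concavity facts
    have hconc : ∀ p : ℝ, 0 ≤ p → p ≤ 1 →
        t * a ^ p + (1 - t) * b ^ p ≤ c ^ p := by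
      intro p hp0 hp1
      have := (Real.concaveOn_rpow hp0 hp1).2 (Set.mem_Ici.2 ha) (Set.mem_Ici.2 hb)
        (show (0:ℝ) ≤ t from ht) (show (0:ℝ) ≤ 1 - t by linarith)
        (show t + (1 - t) = 1 by ring)
      simpa [smul_eq_mul] using this
    have hP1 := hconc ((1:ℝ)/4) (by norm_num) (by norm_num)
    have hP2 := hconc ((3:ℝ)/4) (by norm_num) (by norm_num)
    -- rewrite sqrt and rpow products
    have hsq : ∀ x : ℝ, 0 ≤ x → x ^ ((1:ℝ)/4) * Real.sqrt x = x ^ ((3:ℝ)/4) := by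
      intro x hx
      rw [Real.sqrt_eq_rpow, ← Real.rpow_add' hx (by norm_num)]
      norm_num
    have hcC : c ^ ((1:ℝ)/4) * C = c ^ ((3:ℝ)/4) := by
      rw [hC]; exact hsq c hc0
    have haA : a ^ ((1:ℝ)/4) * A = a ^ ((3:ℝ)/4) := by
      rw [hA]; exact hsq a ha
    have hbB : b ^ ((1:ℝ)/4) * B = b ^ ((3:ℝ)/4) := by
      rw [hB]; exact hsq b hb
    have ha4 : 0 ≤ a ^ ((1:ℝ)/4) := Real.rpow_nonneg ha _
    have hb4 : 0 ≤ b ^ ((1:ℝ)/4) := Real.rpow_nonneg hb _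
    have hc4 : 0 ≤ c ^ ((1:ℝ)/4) := Real.rpow_nonneg hc0 _
    calc t * (a ^ ((1:ℝ)/4) * f A) + (1 - t) * (b ^ ((1:ℝ)/4) * f B)
        = m * (t * (a ^ ((1:ℝ)/4) * A) + (1 - t) * (b ^ ((1:ℝ)/4) * B))
          + k * (t * a ^ ((1:ℝ)/4) + (1 - t) * b ^ ((1:ℝ)/4)) := by
          rw [hfA, hfB]; ring
      _ = m * (t * a ^ ((3:ℝ)/4) + (1 - t) * b ^ ((3:ℝ)/4))
          + k * (t * a ^ ((1:ℝ)/4) + (1 - t) * b ^ ((1:ℝ)/4)) := by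
          rw [haA, hbB]
      _ ≤ m * c ^ ((3:ℝ)/4) + k * c ^ ((1:ℝ)/4) := by
          have := mul_le_mul_of_nonneg_left hP2 hm0
          have := mul_le_mul_of_nonneg_left hP1 hk0
          linarith
      _ = c ^ ((1:ℝ)/4) * (m * C + k) := by rw [← hcC]; ring
      _ ≤ c ^ ((1:ℝ)/4) * f C := mul_le_mul_of_nonneg_left hchord hc4
  intro a b t ha hb ht ht1
  rcases le_or_gt a b with hab | hab
  · exact key a b t ha hb ht ht1 hab
  · have := key b a (1 - t) hb ha (by linarith) (by linarith) hab.le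
    have h1 : (1 : ℝ) - (1 - t) = t := by ring
    rw [h1] at this
    have h2 : (1 - t) * b + t * a = t * a + (1 - t) * b := by ring
    rw [h2] at this
    linarith
end
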